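/- Let R be a commutative ring, ι: R → T(R) the canonical map to its associated von Neumann regular ring, C ⊆ Spec(T(R)), and C_R := {ι⁻¹(P) | P ∈ C}. For an ultrafilter 𝒰 on C with corresponding ultrafilter 𝒰_R on C_R, the ultrafilter limit prime of 𝒰_R in R equals the contraction ι⁻¹(P_𝒰) of the ultrafilter limit prime of 𝒰 in T(R). Hence ι^a: Spec(T(R)) → Spec(R) is a homeomorphism for the ultrafilter topologies. -/

import Mathlib

open MvPolynomial in
/-- The ideal of relations `a² X_a - a`, `a X_a² - X_a` (one indeterminate per element). -/
noncomputable def TRel (R : Type*) [CommRing R] : Ideal (MvPolynomial R R) :=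
  Ideal.span {p : MvPolynomial R R | ∃ a : R,
    p = C a ^ 2 * X a - C a ∨ p = C a * X a ^ 2 - X a}

/-- The von Neumann regular ring `T(R)` canonically associated with `R`. -/
abbrev TRing (R : Type*) [CommRing R] := MvPolynomial R R ⧸ TRel R

/-- The canonical ring homomorphism `ι : R → T(R)`. -/
noncomputable def iotaT (R : Type*) [CommRing R] : R →+* TRing R :=
  (Ideal.Quotient.mk (TRel R)).comp MvPolynomial.C

/-- The ultrafilter limit set: for an ultrafilter `U` on `C ⊆ Spec R`,
`P_U = {a ∈ R | {P ∈ C | a ∈ P} ∈ U}`. -/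
def ultraLimit {R : Type*} [CommRing R] (C : Set (PrimeSpectrum R)) (U : Ultrafilter C) :
    Set R :=
  {a : R | {P : C | a ∈ (P : PrimeSpectrum R).asIdeal} ∈ U}

/-- `C` is ultrafilter closed if it contains every ultrafilter limit prime. -/
def UltraClosed {R : Type*} [CommRing R] (C : Set (PrimeSpectrum R)) : Prop :=
  ∀ U : Ultrafilter C, ∀ P : PrimeSpectrum R, (P.asIdeal : Set R) = ultraLimit C U → P ∈ C

/-- The patch (constructible) topology: the coarsest topology where every `V(I)`
and every `D(a)` is closed; equivalently generated by the Zariski opens together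
with the sets `V(a)`. -/
def patchTop (R : Type*) [CommRing R] : TopologicalSpace (PrimeSpectrum R) :=
  TopologicalSpace.generateFrom
    ({s | ∃ I : Ideal R, s = (PrimeSpectrum.zeroLocus (I : Set R))ᶜ} ∪
     {s | ∃ a : R, s = PrimeSpectrum.zeroLocus {a}})
section aux
variable {R : Type*} [CommRing R]
open MvPolynomial

noncomputable def xT (a : R) : TRing R := Ideal.Quotient.mk (TRel R) (X a)

lemma iotaT_def (a : R) : iotaT R a = Ideal.Quotient.mk (TRel R) (C a) := rfl

lemma rel1 (a : R) : iotaT R a ^ 2 * xT a = iotaT R a := by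
  have h : (C a ^ 2 * X a - C a : MvPolynomial R R) ∈ TRel R :=
    Ideal.subset_span ⟨a, Or.inl rfl⟩
  have h0 := (Ideal.Quotient.eq_zero_iff_mem).mpr h
  rw [map_sub, sub_eq_zero] at h0
  simpa [iotaT_def, xT, map_mul, map_pow] using h0

lemma rel2 (a : R) : iotaT R a * xT a ^ 2 = xT a := by
  have h : (C a * X a ^ 2 - X a : MvPolynomial R R) ∈ TRel R :=
    Ideal.subset_span ⟨a, Or.inr rfl⟩
  have h0 := (Ideal.Quotient.eq_zero_iff_mem).mpr h
  rw [map_sub, sub_eq_zero] at h0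
  simpa [iotaT_def, xT, map_mul, map_pow] using h0

/-- key approximation lemma -/
lemma key (P : Ideal R) (hP : P.IsPrime) (J : Ideal (TRing R))
    (h1 : ∀ a ∈ P, xT a ∈ J)
    (h2 : ∀ a ∉ P, iotaT R a * xT a - 1 ∈ J) (t : TRing R) :
    ∃ r s : R, s ∉ P ∧ iotaT R s * t - iotaT R r ∈ J := by
  obtain ⟨p, rfl⟩ := Ideal.Quotient.mk_surjective t
  induction p using MvPolynomial.induction_on with
  | C a => exact ⟨a, 1, fun h => hP.ne_top (P.eq_top_iff_one.mpr h),
      by simp [iotaT_def]⟩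
  | add p q hp hq =>
      obtain ⟨r1, s1, hs1, hm1⟩ := hp
      obtain ⟨r2, s2, hs2, hm2⟩ := hq
      refine ⟨r1 * s2 + r2 * s1, s1 * s2, fun h => by
        rcases hP.mem_or_mem h with h | h; exacts [hs1 h, hs2 h], ?_⟩
      have : iotaT R (s1 * s2) * (Ideal.Quotient.mk (TRel R)) (p + q)
          - iotaT R (r1 * s2 + r2 * s1)
          = iotaT R s2 * (iotaT R s1 * (Ideal.Quotient.mk (TRel R)) p - iotaT R r1)
          + iotaT R s1 * (iotaT R s2 * (Ideal.Quotient.mk (TRel R)) q - iotaT R r2) := by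
        simp only [map_add, map_mul]; ring
      rw [this]
      exact J.add_mem (J.mul_mem_left _ hm1) (J.mul_mem_left _ hm2)
  | mul_X p a hp =>
      obtain ⟨r, s, hs, hm⟩ := hp
      by_cases ha : a ∈ P
      · refine ⟨0, 1, fun h => hP.ne_top (P.eq_top_iff_one.mpr h), ?_⟩
        have : iotaT R 1 * (Ideal.Quotient.mk (TRel R)) (p * X a) - iotaT R 0
            = (Ideal.Quotient.mk (TRel R)) p * xT a := by
          simp [xT, map_mul]
        rw [this]
        exact J.mul_mem_left _ (h1 a ha)
      · refine ⟨r, s * a, fun h => by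
          rcases hP.mem_or_mem h with h | h; exacts [hs h, ha h], ?_⟩
        have : iotaT R (s * a) * (Ideal.Quotient.mk (TRel R)) (p * X a) - iotaT R r
            = iotaT R a * xT a * (iotaT R s * (Ideal.Quotient.mk (TRel R)) p - iotaT R r)
            + iotaT R r * (iotaT R a * xT a - 1) := by
          simp only [map_mul, xT]; ring
        rw [this]
        exact J.add_mem (J.mul_mem_left _ hm) (J.mul_mem_left _ (h2 a ha))

lemma mem_xT_of_mem {Q : Ideal (TRing R)} (hQ : Q.IsPrime) {a : R}
    (ha : iotaT R a ∈ Q) : xT a ∈ Q := by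
  rw [← rel2 a]
  exact Q.mul_mem_right _ ha

lemma sub_one_mem_of_not_mem {Q : Ideal (TRing R)} (hQ : Q.IsPrime) {a : R}
    (ha : iotaT R a ∉ Q) : iotaT R a * xT a - 1 ∈ Q := by
  have h0 : iotaT R a * (iotaT R a * xT a - 1) = 0 := by
    have := rel1 (R := R) a
    ring_nf
    ring_nf at this
    rw [mul_comm] at this ⊢
    linear_combination this
  rcases hQ.mem_or_mem (show iotaT R a * (iotaT R a * xT a - 1) ∈ Q by rw [h0]; exact Q.zero_mem)
    with h | h
  · exact absurd h ha
  · exact h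

lemma comap_iotaT_injective :
    Function.Injective (fun Q : PrimeSpectrum (TRing R) => PrimeSpectrum.comap (iotaT R) Q) := by
  intro Q1 Q2 h
  have hP : Ideal.comap (iotaT R) Q1.asIdeal = Ideal.comap (iotaT R) Q2.asIdeal := by
    have := congrArg PrimeSpectrum.asIdeal h
    simpa [PrimeSpectrum.comap_asIdeal] using this
  have hPprime : (Ideal.comap (iotaT R) Q1.asIdeal).IsPrime := Ideal.IsPrime.comap _
  have hmem : ∀ a : R, a ∈ Ideal.comap (iotaT R) Q1.asIdeal ↔ iotaT R a ∈ Q1.asIdeal :=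
    fun a => Iff.rfl
  have hmem2 : ∀ a : R, a ∈ Ideal.comap (iotaT R) Q1.asIdeal ↔ iotaT R a ∈ Q2.asIdeal :=
    fun a => by rw [hP]; exact Iff.rfl
  have h1 : ∀ a ∈ Ideal.comap (iotaT R) Q1.asIdeal, xT a ∈ Q1.asIdeal ⊓ Q2.asIdeal := fun a ha =>
    ⟨mem_xT_of_mem Q1.2 ((hmem a).mp ha), mem_xT_of_mem Q2.2 ((hmem2 a).mp ha)⟩
  have h2 : ∀ a ∉ Ideal.comap (iotaT R) Q1.asIdeal,
      iotaT R a * xT a - 1 ∈ Q1.asIdeal ⊓ Q2.asIdeal := fun a ha =>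
    ⟨sub_one_mem_of_not_mem Q1.2 (fun hc => ha ((hmem a).mpr hc)),
     sub_one_mem_of_not_mem Q2.2 (fun hc => ha ((hmem2 a).mpr hc))⟩
  have main : ∀ (Qa Qb : PrimeSpectrum (TRing R)),
      (∀ a : R, a ∈ Ideal.comap (iotaT R) Q1.asIdeal ↔ iotaT R a ∈ Qa.asIdeal) →
      (∀ a : R, a ∈ Ideal.comap (iotaT R) Q1.asIdeal ↔ iotaT R a ∈ Qb.asIdeal) →
      (Q1.asIdeal ⊓ Q2.asIdeal ≤ Qa.asIdeal) → (Q1.asIdeal ⊓ Q2.asIdeal ≤ Qb.asIdeal) →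
      Qa.asIdeal ≤ Qb.asIdeal := by
    intro Qa Qb hma hmb hJa hJb t ht
    obtain ⟨r, s, hs, hm⟩ := key _ hPprime (Q1.asIdeal ⊓ Q2.asIdeal) h1 h2 t
    have hra : iotaT R r ∈ Qa.asIdeal := by
      have := Qa.asIdeal.sub_mem (Qa.asIdeal.mul_mem_left (iotaT R s) ht) (hJa hm)
      simpa using this
    have hrb : iotaT R r ∈ Qb.asIdeal := (hmb r).mp ((hma r).mpr hra)
    have hst : iotaT R s * t ∈ Qb.asIdeal := by
      have := Qb.asIdeal.add_mem (hJb hm) hrb; simpa using this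
    rcases Qb.2.mem_or_mem hst with hc | hc
    · exact absurd ((hmb s).mpr hc) hs
    · exact hc
  exact PrimeSpectrum.ext (le_antisymm
    (main Q1 Q2 hmem hmem2 inf_le_left inf_le_right)
    (main Q2 Q1 hmem2 hmem inf_le_right inf_le_left))

def ultraPrime (C : Set (PrimeSpectrum R)) (U : Ultrafilter C) : PrimeSpectrum R where
  asIdeal :=
    { carrier := ultraLimit C U
      zero_mem' := Filter.univ_mem' (fun P => P.1.asIdeal.zero_mem)
      add_mem' := fun ha hb => Filter.mem_of_superset (Filter.inter_mem ha hb)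
        (fun P hP => P.1.asIdeal.add_mem hP.1 hP.2)
      smul_mem' := fun c x hx => Filter.mem_of_superset hx
        (fun P hP => by simpa [smul_eq_mul] using P.1.asIdeal.mul_mem_left c hP) }
  isPrime := by
    constructor
    · intro htop
      have h1 : ({P : C | (1:R) ∈ P.1.asIdeal} : Set C) ∈ U :=
        Submodule.eq_top_iff'.mp htop 1
      have : ({P : C | (1:R) ∈ P.1.asIdeal} : Set C) = ∅ := by
        ext P; simp only [Set.mem_setOf_eq, Set.mem_empty_iff_false, iff_false]
        exact fun hc => P.1.2.ne_top (P.1.asIdeal.eq_top_iff_one.mpr hc)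
      rw [this] at h1
      exact Filter.empty_notMem (U : Filter C) h1
    · intro x y hxy
      have : ({P : C | x * y ∈ P.1.asIdeal} : Set C) ⊆
          {P : C | x ∈ P.1.asIdeal} ∪ {P : C | y ∈ P.1.asIdeal} := fun P hP =>
        P.1.2.mem_or_mem hP
      have hu : ({P : C | x ∈ P.1.asIdeal} ∪ {P : C | y ∈ P.1.asIdeal} : Set C) ∈ U :=
        Filter.mem_of_superset hxy this
      exact Ultrafilter.union_mem_iff.mp hu

lemma ultraPrime_coe (C : Set (PrimeSpectrum R)) (U : Ultrafilter C) :
    ((ultraPrime C U).asIdeal : Set R) = ultraLimit C U := rfl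

lemma exists_map_eq {α β : Type*} {g : α → β} (hg : Function.Surjective g)
    (V : Ultrafilter β) : ∃ U : Ultrafilter α, U.map g = V := by
  have hne : (Filter.comap g (V : Filter β)).NeBot :=
    Filter.comap_neBot (fun t ht => by
      obtain ⟨b, hb⟩ := V.nonempty_of_mem ht
      obtain ⟨a, rfl⟩ := hg b
      exact ⟨a, hb⟩)
  refine ⟨Ultrafilter.of (Filter.comap g (V : Filter β)), ?_⟩
  have hle : (Ultrafilter.map g (Ultrafilter.of (Filter.comap g (V : Filter β))) : Filter β)
      ≤ (V : Filter β) := by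
    calc (Ultrafilter.map g (Ultrafilter.of (Filter.comap g (V : Filter β))) : Filter β)
        = Filter.map g (Ultrafilter.of (Filter.comap g (V : Filter β)) : Filter α) := rfl
      _ ≤ Filter.map g (Filter.comap g (V : Filter β)) :=
          Filter.map_mono (Ultrafilter.of_le _)
      _ ≤ (V : Filter β) := Filter.map_comap_le
  exact Ultrafilter.coe_injective (V.unique hle)

noncomputable def psiF (P : Ideal R) : R →+* FractionRing (R ⧸ P) :=
  (algebraMap (R ⧸ P) (FractionRing (R ⧸ P))).comp (Ideal.Quotient.mk P)

lemma comap_iotaT_surjective :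
    Function.Surjective (fun Q : PrimeSpectrum (TRing R) => PrimeSpectrum.comap (iotaT R) Q) := by
  intro P
  haveI hPp : P.asIdeal.IsPrime := P.2
  set K := FractionRing (R ⧸ P.asIdeal)
  letI : Field K := inferInstanceAs (Field (FractionRing (R ⧸ P.asIdeal)))
  set f : R →+* K := psiF P.asIdeal with hf
  have hrel : ∀ q ∈ {p : MvPolynomial R R | ∃ a : R,
      p = C a ^ 2 * X a - C a ∨ p = C a * X a ^ 2 - X a},
      MvPolynomial.eval₂Hom f (fun a => (f a)⁻¹) q = 0 := by
    rintro q ⟨a, rfl | rfl⟩ <;>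
    · simp only [map_sub, map_mul, map_pow, MvPolynomial.eval₂Hom_C, MvPolynomial.eval₂Hom_X']
      by_cases h : f a = 0
      · simp [h]
      · field_simp
        ring
  have hker : TRel R ≤ RingHom.ker (MvPolynomial.eval₂Hom f (fun a => (f a)⁻¹)) := by
    rw [TRel, Ideal.span_le]
    intro q hq
    exact hrel q hq
  set psi : TRing R →+* K :=
    Ideal.Quotient.lift (TRel R) (MvPolynomial.eval₂Hom f (fun a => (f a)⁻¹))
      (fun x hx => hker hx) with hpsi
  have hpsi_iota : ∀ a : R, psi (iotaT R a) = f a := fun a => by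
    simp only [hpsi, iotaT_def]
    exact MvPolynomial.eval₂Hom_C _ _ _
  refine ⟨⟨RingHom.ker psi, RingHom.ker_isPrime psi⟩, ?_⟩
  apply PrimeSpectrum.ext
  ext a
  show a ∈ Ideal.comap (iotaT R) (RingHom.ker psi) ↔ a ∈ P.asIdeal
  rw [Ideal.mem_comap, RingHom.mem_ker, hpsi_iota a]
  constructor
  · intro h
    have : Ideal.Quotient.mk P.asIdeal a = 0 := by
      have hinj := IsFractionRing.injective (R ⧸ P.asIdeal) K
      exact hinj (by rw [map_zero]; simpa only [hf, psiF, RingHom.comp_apply] using h)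
    exact (Ideal.Quotient.eq_zero_iff_mem).mp this
  · intro h
    simp [hf, psiF, Ideal.Quotient.eq_zero_iff_mem.mpr h]
end aux

lemma ultraLimit_comap {R : Type*} [CommRing R] (C : Set (PrimeSpectrum (TRing R)))
    (U : Ultrafilter C) :
    ultraLimit ((PrimeSpectrum.comap (iotaT R)) '' C)
        (U.map (fun P : C =>
          (⟨PrimeSpectrum.comap (iotaT R) P.1, Set.mem_image_of_mem _ P.2⟩ :
            ↥((PrimeSpectrum.comap (iotaT R)) '' C)))) =
      ⇑(iotaT R) ⁻¹' ultraLimit C U := by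
  ext a
  show _ ∈ Ultrafilter.map _ U ↔ _
  rw [Ultrafilter.mem_map]
  constructor
  · intro h
    refine Filter.mem_of_superset h (fun P hP => ?_)
    simpa [PrimeSpectrum.comap_asIdeal, Ideal.mem_comap] using hP
  · intro h
    refine Filter.mem_of_superset h (fun P hP => ?_)
    simpa [PrimeSpectrum.comap_asIdeal, Ideal.mem_comap] using hP

lemma comap_surj_on {R : Type*} [CommRing R] (C : Set (PrimeSpectrum (TRing R))) :
    Function.Surjective (fun P : C =>
      (⟨PrimeSpectrum.comap (iotaT R) P.1, Set.mem_image_of_mem _ P.2⟩ :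
        ↥((PrimeSpectrum.comap (iotaT R)) '' C))) := by
  rintro ⟨P', hP'⟩
  obtain ⟨Q, hQ, rfl⟩ := hP'
  exact ⟨⟨Q, hQ⟩, rfl⟩

theorem comap_iotaT_ultraHomeomorph (R : Type*) [CommRing R]
    (C : Set (PrimeSpectrum (TRing R))) (U : Ultrafilter C) :
    ultraLimit ((PrimeSpectrum.comap (iotaT R)) '' C)
        (U.map (fun P : C =>
          (⟨PrimeSpectrum.comap (iotaT R) P.1, Set.mem_image_of_mem _ P.2⟩ :
            ↥((PrimeSpectrum.comap (iotaT R)) '' C)))) =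
      ⇑(iotaT R) ⁻¹' ultraLimit C U ∧
    (UltraClosed C ↔ UltraClosed ((PrimeSpectrum.comap (iotaT R)) '' C)) ∧
    Function.Bijective (fun Q : PrimeSpectrum (TRing R) =>
      PrimeSpectrum.comap (iotaT R) Q) := by
  refine ⟨ultraLimit_comap C U, ?_, comap_iotaT_injective, comap_iotaT_surjective⟩
  constructor
  · intro hC V P hP
    obtain ⟨U', hU'⟩ := exists_map_eq (comap_surj_on C) V
    have hQC : ultraPrime C U' ∈ C := hC U' (ultraPrime C U') (ultraPrime_coe C U')
    refine ⟨ultraPrime C U', hQC, ?_⟩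
    have hset : (P.asIdeal : Set R) =
        ((PrimeSpectrum.comap (iotaT R) (ultraPrime C U')).asIdeal : Set R) := by
      rw [hP, ← hU', ultraLimit_comap C U']
      ext a
      simp [PrimeSpectrum.comap_asIdeal, Ideal.mem_comap]
      exact Iff.rfl
    exact (PrimeSpectrum.ext (SetLike.coe_injective hset)).symm
  · intro hI U0 Q hQ
    have h1 : ((PrimeSpectrum.comap (iotaT R) Q).asIdeal : Set R) =
        ultraLimit ((PrimeSpectrum.comap (iotaT R)) '' C)
          (U0.map (fun P : C =>
            (⟨PrimeSpectrum.comap (iotaT R) P.1, Set.mem_image_of_mem _ P.2⟩ :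
              ↥((PrimeSpectrum.comap (iotaT R)) '' C)))) := by
      rw [ultraLimit_comap C U0, ← hQ]
      ext a
      simp [PrimeSpectrum.comap_asIdeal, Ideal.mem_comap]
    obtain ⟨Q', hQ'C, hQ'⟩ := hI (U0.map _) (PrimeSpectrum.comap (iotaT R) Q) h1
    have heq : Q' = Q := comap_iotaT_injective hQ'
    exact heq ▸ hQ'C
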